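/- For every compact convex set C ⊆ ℝ² and every integer k ≥ 3 there exists a convex polygon Q ⊆ C with at most k vertices such that for every point x ∈ C \ Q there are points y, z ∈ Q with ∠yxz ≥ (1 − 2/k)·π; that is, α(C,Q) ≥ (1 − 2/k)·π. -/

import Mathlib

set_option maxHeartbeats 1600000
open Real
open scoped RealInnerProductSpace


/-!
STATEMENT 3: For every compact convex set C ⊆ ℝ² and every integer k ≥ 3 there
exists a convex polygon Q ⊆ C with at most k vertices such that for every point
x ∈ C \ Q there are points y, z ∈ Q with ∠yxz ≥ (1 − 2/k)·π; that is,
α(C,Q) ≥ (1 − 2/k)·π.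
-/

noncomputable section

abbrev Pt := EuclideanSpace ℝ (Fin 2)



def dir (θ : ℝ) : Pt := (WithLp.equiv 2 (Fin 2 → ℝ)).symm ![Real.cos θ, Real.sin θ]

lemma dir_zero (θ : ℝ) : dir θ 0 = Real.cos θ := rfl
lemma dir_one (θ : ℝ) : dir θ 1 = Real.sin θ := rfl

lemma dir_add_int (θ : ℝ) (n : ℤ) : dir (θ + n * (2*π)) = dir θ := by
  unfold dir
  congr 1
  funext i
  fin_cases i <;>
    simp [Real.cos_add_int_mul_two_pi, Real.sin_add_int_mul_two_pi]

lemma inner_expand (a b : Pt) : ⟪a, b⟫ = a 0 * b 0 + a 1 * b 1 := by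
  simp [PiLp.inner_apply, Fin.sum_univ_two, RCLike.inner_apply, mul_comm]

lemma key_trig (β γ s t : ℝ) (hβ : 0 ≤ β) (hγ : 0 ≤ γ) (hδ : β + γ ≤ 2*π/3)
    (hs1 : π/2 < s) (hs2 : s < 3*π/2) (ht1 : π/2 < t) (ht2 : t < 3*π/2)
    (hsb : 0 ≤ Real.cos (s + β)) (htg : 0 ≤ Real.cos (t - γ)) :
    Real.cos (s - t) ≤ -Real.cos (β + γ) := by
  have hπ := Real.pi_pos
  have h1 : 3*π/2 ≤ s + β := by
    by_contra h
    push_neg at h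
    have := Real.cos_neg_of_pi_div_two_lt_of_lt (by linarith : π/2 < s + β) (by linarith)
    linarith
  have h2 : t - γ ≤ π/2 := by
    by_contra h
    push_neg at h
    have := Real.cos_neg_of_pi_div_two_lt_of_lt h (by linarith)
    linarith
  have := Real.cos_le_cos_of_nonneg_of_le_pi (by linarith : (0:ℝ) ≤ π - (β+γ))
    (by linarith : s - t ≤ π) (by linarith)
  rwa [Real.cos_pi_sub] at this

lemma exists_rep (x : ℝ) (hx : Real.cos x < 0) :
    ∃ n : ℤ, π/2 < x - n*(2*π) ∧ x - n*(2*π) < 3*π/2 := by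
  have hπ := Real.pi_pos
  set n : ℤ := round (x / (2*π)) with hn
  have h1 : |x/(2*π) - n| ≤ 1/2 := abs_sub_round _
  rw [abs_le] at h1
  have heq : x - n*(2*π) = (x/(2*π) - n) * (2*π) := by field_simp
  have hlb : -π ≤ x - n*(2*π) := by rw [heq]; nlinarith [h1.1]
  have hub : x - n*(2*π) ≤ π := by rw [heq]; nlinarith [h1.2]
  have hy : Real.cos (x - n*(2*π)) = Real.cos x := Real.cos_sub_int_mul_two_pi x n
  by_cases hc : -(π/2) ≤ x - n*(2*π)
  · have : π/2 < x - n*(2*π) := by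
      by_contra h
      push_neg at h
      have := Real.cos_nonneg_of_mem_Icc ⟨hc, h⟩
      linarith
    exact ⟨n, this, by linarith⟩
  · push_neg at hc
    refine ⟨n - 1, ?_, ?_⟩ <;> push_cast <;> nlinarith

lemma polar_rep (a : Pt) (ha : a ≠ 0) :
    ∃ θ : ℝ, a 0 = ‖a‖ * Real.cos θ ∧ a 1 = ‖a‖ * Real.sin θ := by
  set z : ℂ := ⟨a 0, a 1⟩ with hz
  have hz0 : z ≠ 0 := by
    intro h
    apply ha
    have h0 : a 0 = 0 := congrArg Complex.re h
    have h1 : a 1 = 0 := congrArg Complex.im h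
    ext i
    fin_cases i <;> simpa
  have habs : ‖z‖ = ‖a‖ := by
    rw [Complex.norm_def, Complex.normSq_apply, EuclideanSpace.norm_eq]
    simp [Fin.sum_univ_two, Real.norm_eq_abs, sq_abs]
    ring_nf
    rfl
  have hna : ‖a‖ ≠ 0 := by
    rw [← habs]; exact (norm_ne_zero_iff.mpr hz0)
  refine ⟨Complex.arg z, ?_, ?_⟩
  · have := Complex.cos_arg hz0
    rw [habs] at this
    field_simp at this
    linarith [this]
  · have := Complex.sin_arg z
    rw [habs] at this
    field_simp at this
    linarith [this]

theorem aperture_angle_easy_lower_bound (k : ℕ) (hk : 3 ≤ k)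
    (C : Set Pt) (hCc : IsCompact C) (hCconv : Convex ℝ C) (hCne : C.Nonempty) :
    ∃ f : Fin k → Pt, convexHull ℝ (Set.range f) ⊆ C ∧
      ∀ x ∈ C \ convexHull ℝ (Set.range f),
        ∃ y ∈ convexHull ℝ (Set.range f), ∃ z ∈ convexHull ℝ (Set.range f),
          (1 - 2 / (k : ℝ)) * Real.pi ≤ EuclideanGeometry.angle y x z := by
  classical
  have hπ := Real.pi_pos
  have hkR : (3:ℝ) ≤ (k:ℝ) := by exact_mod_cast hk
  have hk0 : (0:ℝ) < (k:ℝ) := by linarith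
  -- maximizers in every direction
  have hmax : ∀ θ : ℝ, ∃ p ∈ C, ∀ q ∈ C, ⟪q, dir θ⟫ ≤ ⟪p, dir θ⟫ := by
    intro θ
    obtain ⟨p, hpC, hp⟩ := hCc.exists_isMaxOn hCne
      ((innerSL ℝ (dir θ)).continuous.continuousOn)
    refine ⟨p, hpC, fun q hq => ?_⟩
    have h : ⟪dir θ, q⟫ ≤ ⟪dir θ, p⟫ := hp hq
    rw [real_inner_comm (dir θ) q, real_inner_comm (dir θ) p]
    exact h
  choose m hmC hm using hmax
  set f : Fin k → Pt := fun i => m (2*π*(i:ℕ)/k) with hf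
  have hrange : Set.range f ⊆ C := by rintro _ ⟨i, rfl⟩; exact hmC _
  refine ⟨f, convexHull_min hrange hCconv, ?_⟩
  intro x hx
  obtain ⟨hxC, hxQ⟩ := hx
  set Q := convexHull ℝ (Set.range f) with hQ
  have hQclosed : IsClosed Q := ((Set.finite_range f).isCompact_convexHull ℝ).isClosed
  obtain ⟨F, u, hFQ, hFx⟩ :=
    geometric_hahn_banach_closed_point (convex_convexHull ℝ _) hQclosed hxQ
  set v : Pt := (InnerProductSpace.toDual ℝ Pt).symm F with hv
  have hvinner : ∀ q : Pt, ⟪v, q⟫ = F q := fun q => InnerProductSpace.toDual_symm_apply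
  have hvne : v ≠ 0 := by
    intro h
    have hy0 : f ⟨0, by omega⟩ ∈ Q := subset_convexHull ℝ _ ⟨_, rfl⟩
    have h1 := hFQ _ hy0
    have hF0 : F (f ⟨0, by omega⟩) = 0 := by rw [← hvinner, h, inner_zero_left]
    have hFx0 : F x = 0 := by rw [← hvinner, h, inner_zero_left]
    linarith
  obtain ⟨φ, hφ0, hφ1⟩ := polar_rep v hvne
  have hvnorm : 0 < ‖v‖ := norm_pos_iff.2 hvne
  -- choose the sector
  set j : ℤ := ⌊φ * k / (2*π)⌋ with hj
  have hfl1 : (j:ℝ) ≤ φ * k / (2*π) := Int.floor_le _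
  have hfl2 : φ * k / (2*π) < j + 1 := Int.lt_floor_add_one _
  have h2π : (0:ℝ) < 2*π := by linarith
  have hjle : 2*π*j/k ≤ φ := by
    rw [div_le_iff₀ hk0]
    have := (le_div_iff₀ h2π).1 hfl1
    linarith
  have hjlt : φ < 2*π*(j+1)/k := by
    rw [lt_div_iff₀ hk0]
    have := (div_lt_iff₀ h2π).1 hfl2
    push_cast
    linarith
  set θ₁ : ℝ := 2*π*j/k with hθ₁
  set θ₂ : ℝ := 2*π*(j+1)/k with hθ₂
  set β : ℝ := φ - θ₁ with hβ
  set γ : ℝ := θ₂ - φ with hγ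
  have hβ0 : 0 ≤ β := by simp [hβ]; linarith
  have hγ0 : 0 ≤ γ := by simp [hγ]; linarith
  have hβγ : β + γ = 2*π/k := by rw [hβ, hγ, hθ₁, hθ₂]; ring
  have hδle : β + γ ≤ 2*π/3 := by
    rw [hβγ]
    apply div_le_div_of_nonneg_left (by linarith) (by norm_num) hkR
  -- the two vertices
  have hk0' : 0 < k := by omega
  set i₁ : ℕ := (j % k).toNat with hi₁
  set i₂ : ℕ := ((j+1) % k).toNat with hi₂
  have hkz : (k:ℤ) ≠ 0 := by exact_mod_cast hk0'.ne'
  have hi₁lt : i₁ < k := by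
    have h1 : 0 ≤ j % k := Int.emod_nonneg _ hkz
    have h2 : j % k < k := Int.emod_lt_of_pos _ (by exact_mod_cast hk0')
    omega
  have hi₂lt : i₂ < k := by
    have h1 : 0 ≤ (j+1) % k := Int.emod_nonneg _ hkz
    have h2 : (j+1) % k < k := Int.emod_lt_of_pos _ (by exact_mod_cast hk0')
    omega
  set y : Pt := f ⟨i₁, hi₁lt⟩ with hy
  set z : Pt := f ⟨i₂, hi₂lt⟩ with hz
  have hyQ : y ∈ Q := subset_convexHull ℝ _ ⟨_, rfl⟩
  have hzQ : z ∈ Q := subset_convexHull ℝ _ ⟨_, rfl⟩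
  -- y maximizes direction θ₁, z maximizes direction θ₂
  have hdir₁ : dir (2*π*(i₁:ℕ)/k) = dir θ₁ := by
    have hd : θ₁ = 2*π*(i₁:ℕ)/k + (j / k : ℤ) * (2*π) := by
      have hZ : (i₁ : ℤ) + (j / (k:ℤ)) * (k:ℤ) = j := by
        have h2 := Int.mul_ediv_add_emod j k
        have h1 : ((j % k).toNat : ℤ) = j % k :=
          Int.toNat_of_nonneg (Int.emod_nonneg _ hkz)
        rw [hi₁, h1]
        linarith
      have hrepr : (j:ℝ) = (i₁:ℝ) + (j / (k:ℤ) : ℤ) * (k:ℝ) := by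
        exact_mod_cast hZ.symm
      rw [hθ₁, hrepr]
      field_simp
    rw [hd, dir_add_int]
  have hdir₂ : dir (2*π*(i₂:ℕ)/k) = dir θ₂ := by
    have hd : θ₂ = 2*π*(i₂:ℕ)/k + ((j+1) / k : ℤ) * (2*π) := by
      have hZ : (i₂ : ℤ) + ((j+1) / (k:ℤ)) * (k:ℤ) = j+1 := by
        have h2 := Int.mul_ediv_add_emod (j+1) k
        have h1 : (((j+1) % k).toNat : ℤ) = (j+1) % k :=
          Int.toNat_of_nonneg (Int.emod_nonneg _ hkz)
        rw [hi₂, h1]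
        linarith
      have hrepr : ((j:ℝ)+1) = (i₂:ℝ) + ((j+1) / (k:ℤ) : ℤ) * (k:ℝ) := by
        exact_mod_cast hZ.symm
      rw [hθ₂, hrepr]
      field_simp
    rw [hd, dir_add_int]
  have hmaxy : ∀ q ∈ C, ⟪q, dir θ₁⟫ ≤ ⟪y, dir θ₁⟫ := by
    intro q hq
    rw [← hdir₁]
    exact hm _ q hq
  have hmaxz : ∀ q ∈ C, ⟪q, dir θ₂⟫ ≤ ⟪z, dir θ₂⟫ := by
    intro q hq
    rw [← hdir₂]
    exact hm _ q hq
  -- the difference vectors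
  set a : Pt := y - x with ha
  set b : Pt := z - x with hb
  have hav : ⟪a, v⟫ < 0 := by
    have h1 : F y < F x := lt_trans (hFQ _ hyQ) hFx
    have : ⟪v, a⟫ < 0 := by
      rw [ha, inner_sub_right, hvinner, hvinner]; linarith
    rwa [real_inner_comm] at this
  have hbv : ⟪b, v⟫ < 0 := by
    have h1 : F z < F x := lt_trans (hFQ _ hzQ) hFx
    have : ⟪v, b⟫ < 0 := by
      rw [hb, inner_sub_right, hvinner, hvinner]; linarith
    rwa [real_inner_comm] at this
  have hane : a ≠ 0 := by
    intro h; rw [h, inner_zero_left] at hav; linarith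
  have hbne : b ≠ 0 := by
    intro h; rw [h, inner_zero_left] at hbv; linarith
  have hau : 0 ≤ ⟪a, dir θ₁⟫ := by
    rw [ha, inner_sub_left]
    have := hmaxy x hxC
    linarith
  have hbu : 0 ≤ ⟪b, dir θ₂⟫ := by
    rw [hb, inner_sub_left]
    have := hmaxz x hxC
    linarith
  obtain ⟨α, hα0, hα1⟩ := polar_rep a hane
  obtain ⟨τ, hτ0, hτ1⟩ := polar_rep b hbne
  have hanorm : 0 < ‖a‖ := norm_pos_iff.2 hane
  have hbnorm : 0 < ‖b‖ := norm_pos_iff.2 hbne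
  -- cosine inequalities
  have hcos_av : Real.cos (α - φ) < 0 := by
    have he : ⟪a, v⟫ = ‖a‖ * ‖v‖ * Real.cos (α - φ) := by
      rw [inner_expand, hα0, hα1, hφ0, hφ1, Real.cos_sub]; ring
    rw [he] at hav
    by_contra hcon
    push_neg at hcon
    have := mul_nonneg (mul_nonneg hanorm.le hvnorm.le) hcon
    linarith
  have hcos_bv : Real.cos (τ - φ) < 0 := by
    have he : ⟪b, v⟫ = ‖b‖ * ‖v‖ * Real.cos (τ - φ) := by
      rw [inner_expand, hτ0, hτ1, hφ0, hφ1, Real.cos_sub]; ring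
    rw [he] at hbv
    by_contra hcon
    push_neg at hcon
    have := mul_nonneg (mul_nonneg hbnorm.le hvnorm.le) hcon
    linarith
  have hcos_au : 0 ≤ Real.cos (α - θ₁) := by
    have he : ⟪a, dir θ₁⟫ = ‖a‖ * Real.cos (α - θ₁) := by
      rw [inner_expand, hα0, hα1, dir_zero, dir_one, Real.cos_sub]; ring
    rw [he] at hau
    by_contra hcon
    push_neg at hcon
    have := mul_neg_of_pos_of_neg hanorm hcon
    linarith
  have hcos_bu : 0 ≤ Real.cos (τ - θ₂) := by
    have he : ⟪b, dir θ₂⟫ = ‖b‖ * Real.cos (τ - θ₂) := by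
      rw [inner_expand, hτ0, hτ1, dir_zero, dir_one, Real.cos_sub]; ring
    rw [he] at hbu
    by_contra hcon
    push_neg at hcon
    have := mul_neg_of_pos_of_neg hbnorm hcon
    linarith
  -- normalize representatives
  obtain ⟨nS, hS1, hS2⟩ := exists_rep (α - φ) hcos_av
  obtain ⟨nT, hT1, hT2⟩ := exists_rep (τ - φ) hcos_bv
  set s : ℝ := (α - φ) - nS*(2*π) with hs
  set t : ℝ := (τ - φ) - nT*(2*π) with ht
  have hsb : 0 ≤ Real.cos (s + β) := by
    have : s + β = (α - θ₁) - nS*(2*π) := by rw [hs, hβ]; ring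
    rw [this, Real.cos_sub_int_mul_two_pi]
    exact hcos_au
  have htg : 0 ≤ Real.cos (t - γ) := by
    have : t - γ = (τ - θ₂) - nT*(2*π) := by rw [ht, hγ]; ring
    rw [this, Real.cos_sub_int_mul_two_pi]
    exact hcos_bu
  have hkey := key_trig β γ s t hβ0 hγ0 hδle hS1 hS2 hT1 hT2 hsb htg
  have hfinal : Real.cos (α - τ) ≤ -Real.cos (2*π/k) := by
    have h1 : α - τ = (s - t) + ((nS - nT : ℤ) : ℝ)*(2*π) := by rw [hs, ht]; push_cast; ring
    rw [h1, Real.cos_add_int_mul_two_pi, ← hβγ]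
    exact hkey
  -- conclude
  refine ⟨y, hyQ, z, hzQ, ?_⟩
  have hib : ⟪a, b⟫ = ‖a‖*‖b‖*Real.cos (α - τ) := by
    rw [inner_expand, hα0, hα1, hτ0, hτ1, Real.cos_sub]; ring
  have hratio : ⟪a, b⟫/(‖a‖*‖b‖) = Real.cos (α - τ) := by
    rw [hib]; field_simp
  have hang : EuclideanGeometry.angle y x z = Real.arccos (Real.cos (α - τ)) := by
    rw [EuclideanGeometry.angle, InnerProductGeometry.angle]
    rw [vsub_eq_sub, vsub_eq_sub, ← ha, ← hb, hratio]
  rw [hang]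
  have hδπ : 2*π/k ≤ π := by
    have : 2*π/k ≤ 2*π/3 := div_le_div_of_nonneg_left (by linarith) (by norm_num) hkR
    linarith
  have hδ0 : 0 ≤ 2*π/k := by positivity
  have harc : Real.arccos (-(Real.cos (2*π/k))) = π - 2*π/k := by
    rw [Real.arccos_neg, Real.arccos_cos hδ0 hδπ]
  have hmono : Real.arccos (-(Real.cos (2*π/k))) ≤ Real.arccos (Real.cos (α - τ)) := by
    have := Real.monotone_arcsin hfinal
    simp only [Real.arccos]
    linarith
  have hgoal : (1 - 2/(k:ℝ))*π = π - 2*π/k := by field_simp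
  rw [hgoal]
  rw [harc] at hmono
  linarith
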